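/- Let M : Matrix (Fin d) (Fin d) ℝ be symmetric (M = Mᵀ) with all entries nonnegative, and let σ(M) : Matrix (Fin d × Fin d) (Fin d × Fin d) ℂ be the diagonal matrix with σ(M) (i,j) (i,j) = M i j and all other entries 0. Then the least r (as an infimum in ℕ∞) such that there exist positive semidefinite χ k : Matrix (Fin d) (Fin d) ℂ (k < r) with σ(M) = Σ_{k<r} χ k ⊗ₖ χ k equals the completely positive rank cp-rank(M), i.e. the least r (in ℕ∞) such that there exists an entrywise nonnegative A : Matrix (Fin d) (Fin r) ℝ with M = A * Aᵀ. In particular, one kind of decomposition exists if and only if the other does. -/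

import Mathlib

open Matrix Kronecker
open scoped BigOperators ComplexOrder

/-- The diagonal psd matrix associated to a nonnegative symmetric matrix `M`. -/
noncomputable def sigmaM {d : ℕ} (M : Matrix (Fin d) (Fin d) ℝ) :
    Matrix (Fin d × Fin d) (Fin d × Fin d) ℂ :=
  Matrix.diagonal (fun p : Fin d × Fin d => (M p.1 p.2 : ℂ))

lemma psd_diag_nonneg {n : Type*} [Fintype n] [DecidableEq n]
    {A : Matrix n n ℂ} (h : A.PosSemidef) (i : n) : 0 ≤ A i i := by
  exact h.diag_nonneg

/-- The symmetric (t.i.) separable rank of `σ(M)` equals the cp rank of `M`,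
as infima in `ℕ∞` (so in particular one decomposition exists iff the other does). -/
theorem tiSepRank_sigmaM_eq_cpRank {d : ℕ} (M : Matrix (Fin d) (Fin d) ℝ)
    (hsymm : M = Mᵀ) (hM : ∀ i j, 0 ≤ M i j) :
    sInf {c : ℕ∞ | ∃ (r : ℕ) (χ : Fin r → Matrix (Fin d) (Fin d) ℂ),
        (∀ k, (χ k).PosSemidef) ∧ sigmaM M = ∑ k, χ k ⊗ₖ χ k ∧ c = (r : ℕ∞)} =
    sInf {c : ℕ∞ | ∃ (r : ℕ) (A : Matrix (Fin d) (Fin r) ℝ),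
        (∀ i k, 0 ≤ A i k) ∧ M = A * Aᵀ ∧ c = (r : ℕ∞)} := by
  congr 1
  ext c
  constructor
  · rintro ⟨r, χ, hpsd, heq, rfl⟩
    refine ⟨r, fun i k => (χ k i i).re, ?_, ?_, rfl⟩
    · intro i k
      exact (Complex.nonneg_iff.mp (psd_diag_nonneg (hpsd k) i)).1
    · ext i j
      have h1 : ∀ k i, (((χ k i i).re : ℂ)) = χ k i i := fun k i =>
        Complex.ext (by simp) (by
          simp [(Complex.nonneg_iff.mp (psd_diag_nonneg (hpsd k) i)).2])
      have h2 := congrFun (congrFun heq (i, j)) (i, j)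
      simp only [sigmaM, diagonal_apply_eq, Matrix.sum_apply,
        Matrix.kroneckerMap_apply] at h2
      have : (M i j : ℂ) = ((∑ k, (χ k i i).re * (χ k j j).re : ℝ) : ℂ) := by
        rw [h2]
        push_cast
        exact Finset.sum_congr rfl fun k _ => by rw [h1, h1]
      have := Complex.ofReal_injective this
      rw [this]
      rfl
  · rintro ⟨r, A, hA, heq, rfl⟩
    refine ⟨r, fun k => Matrix.diagonal (fun i => (A i k : ℂ)), ?_, ?_, rfl⟩
    · intro k
      exact Matrix.PosSemidef.diagonal fun i => by
        exact Complex.nonneg_iff.mpr ⟨by simpa using hA i k, by simp⟩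
    · ext ⟨i, j⟩ ⟨i', j'⟩
      simp only [sigmaM, Matrix.sum_apply, Matrix.kroneckerMap_apply]
      by_cases h : (i, j) = (i', j')
      · obtain ⟨rfl, rfl⟩ := Prod.mk.injEq .. ▸ h
        simp only [diagonal_apply_eq]
        have : M i j = ∑ k, A i k * A j k := by
          rw [heq]; simp [Matrix.mul_apply, Matrix.transpose_apply]
        rw [this]; push_cast; rfl
      · rw [Matrix.diagonal_apply_ne _ h]
        symm
        refine Finset.sum_eq_zero fun k _ => ?_
        rcases not_and_or.mp (fun hc => h (Prod.ext_iff.mpr ⟨hc.1, hc.2⟩)) with h' | h' <;>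
          simp [Matrix.diagonal_apply_ne _ h']
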